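/- Let f, g : ℂ → ℂ be complex differentiable (entire) functions, and define P₂, P₄, P₆ : ℂ² → ℂ by P₂(x,y) = -(g'(x) + f'(y))/2, P₄(x,y) = f(y) - y·(g'(x) + f'(y))/2, P₆(x,y) = g(x) - x·(g'(x) + f'(y))/2. Then (P₂, P₄, P₆) solves the system: for all (x,y) ∈ ℂ², (i) y·∂ₓP₂(x,y) = ∂ₓP₄(x,y); (ii) x·∂_yP₂(x,y) = ∂_yP₆(x,y); (iii) y·∂_yP₂(x,y) + x·∂ₓP₂(x,y) = ∂_yP₄(x,y) + ∂ₓP₆(x,y). -/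

import Mathlib

/-- Second derivative: the derivative of an entire function is differentiable. -/
lemma deriv_differentiable_of_entire {g : ℂ → ℂ} (hg : Differentiable ℂ g) :
    Differentiable ℂ (deriv g) := by
  have h1 : Differentiable ℂ (fderiv ℂ g) := fun z =>
    ((hg.analyticAt z).fderiv).differentiableAt
  have heq : deriv g = fun z => fderiv ℂ g z 1 :=
    funext fun z => (fderiv_apply_one_eq_deriv).symm
  rw [heq]
  exact (ContinuousLinearMap.apply ℂ ℂ (1 : ℂ)).differentiable.comp h1

/-- For arbitrary entire functions `f, g : ℂ → ℂ`, the triple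
`P₂ = -(g'(x)+f'(y))/2`, `P₄ = f(y) - y(g'(x)+f'(y))/2`, `P₆ = g(x) - x(g'(x)+f'(y))/2`
solves the system (i) `y ∂ₓP₂ = ∂ₓP₄`, (ii) `x ∂_yP₂ = ∂_yP₆`,
(iii) `y ∂_yP₂ + x ∂ₓP₂ = ∂_yP₄ + ∂ₓP₆`. -/
theorem furuhata_family_solves_system
    (f g : ℂ → ℂ) (hf : Differentiable ℂ f) (hg : Differentiable ℂ g)
    (P₂ P₄ P₆ : ℂ × ℂ → ℂ)
    (hP₂ : ∀ x y : ℂ, P₂ (x, y) = -(deriv g x + deriv f y) / 2)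
    (hP₄ : ∀ x y : ℂ, P₄ (x, y) = f y - y * (deriv g x + deriv f y) / 2)
    (hP₆ : ∀ x y : ℂ, P₆ (x, y) = g x - x * (deriv g x + deriv f y) / 2) :
    ∀ x y : ℂ,
      y * deriv (fun t => P₂ (t, y)) x = deriv (fun t => P₄ (t, y)) x ∧
      x * deriv (fun t => P₂ (x, t)) y = deriv (fun t => P₆ (x, t)) y ∧
      y * deriv (fun t => P₂ (x, t)) y + x * deriv (fun t => P₂ (t, y)) x =
        deriv (fun t => P₄ (x, t)) y + deriv (fun t => P₆ (t, y)) x := by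
  intro x y
  have hdf := deriv_differentiable_of_entire hf
  have hdg := deriv_differentiable_of_entire hg
  have hddf := (hdf y).hasDerivAt
  have hddg := (hdg x).hasDerivAt
  have hfy := (hf y).hasDerivAt
  have hgx := (hg x).hasDerivAt
  have h2x : HasDerivAt (fun t => P₂ (t, y)) (-(deriv (deriv g) x) / 2) x := by
    have : HasDerivAt (fun t => -(deriv g t + deriv f y) / 2)
        (-(deriv (deriv g) x) / 2) x := by
      simpa using (((hddg.add_const (deriv f y)).neg).div_const 2)
    exact this.congr_of_eventuallyEq (by filter_upwards with t; rw [hP₂])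
  have h2y : HasDerivAt (fun t => P₂ (x, t)) (-(deriv (deriv f) y) / 2) y := by
    have : HasDerivAt (fun t => -(deriv g x + deriv f t) / 2)
        (-(deriv (deriv f) y) / 2) y := by
      simpa using (((hddf.const_add (deriv g x)).neg).div_const 2)
    exact this.congr_of_eventuallyEq (by filter_upwards with t; rw [hP₂])
  have h4x : HasDerivAt (fun t => P₄ (t, y)) (0 - y * deriv (deriv g) x / 2) x := by
    have h2 : HasDerivAt (fun t => f y - y * (deriv g t + deriv f y) / 2)
        (0 - y * deriv (deriv g) x / 2) x :=
      (hasDerivAt_const x (f y)).sub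
        ((((hddg.add_const (deriv f y)).const_mul y)).div_const 2)
    exact h2.congr_of_eventuallyEq (by filter_upwards with t; rw [hP₄])
  have h4y : HasDerivAt (fun t => P₄ (x, t))
      (deriv f y - (1 * (deriv g x + deriv f y) + y * deriv (deriv f) y) / 2) y := by
    have h1 : HasDerivAt (fun t : ℂ => t * (deriv g x + deriv f t))
        (1 * (deriv g x + deriv f y) + y * deriv (deriv f) y) y :=
      (hasDerivAt_id y).mul (hddf.const_add (deriv g x))
    have h2 := hfy.sub (h1.div_const 2)
    exact h2.congr_of_eventuallyEq (by filter_upwards with t; rw [hP₄, Pi.sub_apply])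
  have h6x : HasDerivAt (fun t => P₆ (t, y))
      (deriv g x - (1 * (deriv g x + deriv f y) + x * deriv (deriv g) x) / 2) x := by
    have h1 : HasDerivAt (fun t : ℂ => t * (deriv g t + deriv f y))
        (1 * (deriv g x + deriv f y) + x * deriv (deriv g) x) x :=
      (hasDerivAt_id x).mul (hddg.add_const (deriv f y))
    have h2 := hgx.sub (h1.div_const 2)
    exact h2.congr_of_eventuallyEq (by filter_upwards with t; rw [hP₆, Pi.sub_apply])
  have h6y : HasDerivAt (fun t => P₆ (x, t)) (0 - x * deriv (deriv f) y / 2) y := by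
    have h2 : HasDerivAt (fun t => g x - x * (deriv g x + deriv f t) / 2)
        (0 - x * deriv (deriv f) y / 2) y :=
      (hasDerivAt_const y (g x)).sub
        (((hddf.const_add (deriv g x)).const_mul x).div_const 2)
    exact h2.congr_of_eventuallyEq (by filter_upwards with t; rw [hP₆])
  rw [h2x.deriv, h2y.deriv, h4x.deriv, h4y.deriv, h6x.deriv, h6y.deriv]
  refine ⟨by ring, by ring, by ring⟩
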